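/- Let (m_n) be an increasing sequence in [1,∞) with lim_{n→∞} m_n/n = k for some k ∈ [0,∞). Then for every A ⊆ ℕ, B̄d_{l;(m_n)}(A) = B̄d_{u;(m_n)}(A) = k·B̄d(A) and B̲d_{l;(m_n)}(A) = B̲d_{u;(m_n)}(A) = k·B̲d(A), where B̄d and B̲d denote the usual upper and lower Banach densities. -/

import Mathlib

open Filter Set
open scoped ENNReal symmDiff Topology



/-- Number of elements of `A` in the integer interval `[a, b]`, as an extended nonneg real. -/
noncomputable def cnt (A : Set ℕ) (a b : ℕ) : ℝ≥0∞ :=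
  (Nat.card (↥(A ∩ Set.Icc a b)) : ℝ≥0∞)

/-- Lower `(m_n)`-density: `liminf_n |A ∩ [1, m_n]| / n`. -/
noncomputable def lowDens (m : ℕ → ℝ) (A : Set ℕ) : ℝ≥0∞ :=
  Filter.liminf (fun n : ℕ => cnt A 1 ⌊m n⌋₊ / (n : ℝ≥0∞)) Filter.atTop

/-- Upper `(m_n)`-density: `limsup_n |A ∩ [1, m_n]| / n`. -/
noncomputable def upDens (m : ℕ → ℝ) (A : Set ℕ) : ℝ≥0∞ :=
  Filter.limsup (fun n : ℕ => cnt A 1 ⌊m n⌋₊ / (n : ℝ≥0∞)) Filter.atTop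

/-- Lower `l;(m_n)`-Banach density: `liminf_s liminf_n |A ∩ [n+1, n+m_s]| / s`. -/
noncomputable def BdLL (m : ℕ → ℝ) (A : Set ℕ) : ℝ≥0∞ :=
  Filter.liminf (fun s : ℕ =>
    Filter.liminf (fun n : ℕ => cnt A (n + 1) (n + ⌊m s⌋₊) / (s : ℝ≥0∞)) Filter.atTop)
    Filter.atTop

/-- Lower `u;(m_n)`-Banach density: `limsup_s liminf_n |A ∩ [n+1, n+m_s]| / s`. -/
noncomputable def BdLU (m : ℕ → ℝ) (A : Set ℕ) : ℝ≥0∞ :=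
  Filter.limsup (fun s : ℕ =>
    Filter.liminf (fun n : ℕ => cnt A (n + 1) (n + ⌊m s⌋₊) / (s : ℝ≥0∞)) Filter.atTop)
    Filter.atTop

/-- Upper `l;(m_n)`-Banach density: `liminf_s limsup_n |A ∩ [n+1, n+m_s]| / s`. -/
noncomputable def BdUL (m : ℕ → ℝ) (A : Set ℕ) : ℝ≥0∞ :=
  Filter.liminf (fun s : ℕ =>
    Filter.limsup (fun n : ℕ => cnt A (n + 1) (n + ⌊m s⌋₊) / (s : ℝ≥0∞)) Filter.atTop)
    Filter.atTop

/-- Upper `u;(m_n)`-Banach density: `limsup_s limsup_n |A ∩ [n+1, n+m_s]| / s`. -/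
noncomputable def BdUU (m : ℕ → ℝ) (A : Set ℕ) : ℝ≥0∞ :=
  Filter.limsup (fun s : ℕ =>
    Filter.limsup (fun n : ℕ => cnt A (n + 1) (n + ⌊m s⌋₊) / (s : ℝ≥0∞)) Filter.atTop)
    Filter.atTop


namespace Stmt17Aux




lemma cnt_eq (A : Set ℕ) (a b : ℕ) : cnt A a b = ((A ∩ Set.Icc a b).ncard : ℝ≥0∞) := by
  rw [cnt, Nat.card_coe_set_eq]

lemma cnt_le (A : Set ℕ) (n L : ℕ) : cnt A (n + 1) (n + L) ≤ (L : ℝ≥0∞) := by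
  rw [cnt_eq]
  have h1 : (A ∩ Set.Icc (n + 1) (n + L)).ncard ≤ (Set.Icc (n + 1) (n + L)).ncard :=
    Set.ncard_le_ncard inter_subset_right (Set.finite_Icc _ _)
  have h2 : (Set.Icc (n + 1) (n + L)).ncard = L := by
    rw [← Finset.coe_Icc, Set.ncard_coe_finset, Nat.card_Icc]; omega
  exact_mod_cast h1.trans_eq h2

lemma cnt_mono (A : Set ℕ) (n : ℕ) {L L' : ℕ} (h : L ≤ L') :
    cnt A (n + 1) (n + L) ≤ cnt A (n + 1) (n + L') := by
  rw [cnt_eq, cnt_eq]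
  have := Set.ncard_le_ncard
    (Set.inter_subset_inter_right A (Set.Icc_subset_Icc le_rfl (Nat.add_le_add_left h n)))
    ((Set.finite_Icc (n + 1) (n + L')).inter_of_right A)
  exact_mod_cast this

lemma cnt_split (A : Set ℕ) (n L1 L2 : ℕ) :
    cnt A (n + 1) (n + (L1 + L2))
      = cnt A (n + 1) (n + L1) + cnt A ((n + L1) + 1) ((n + L1) + L2) := by
  rw [cnt_eq, cnt_eq, cnt_eq]
  have hIcc : Set.Icc (n + 1) (n + (L1 + L2))
      = Set.Icc (n + 1) (n + L1) ∪ Set.Icc ((n + L1) + 1) ((n + L1) + L2) := by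
    ext x; simp only [Set.mem_Icc, Set.mem_union]; omega
  have hdis : Disjoint (A ∩ Set.Icc (n + 1) (n + L1))
      (A ∩ Set.Icc ((n + L1) + 1) ((n + L1) + L2)) := by
    rw [Set.disjoint_left]
    rintro x ⟨-, hx1⟩ ⟨-, hx2⟩
    simp only [Set.mem_Icc] at hx1 hx2; omega
  rw [hIcc, Set.inter_union_distrib_left,
    Set.ncard_union_eq hdis ((Set.finite_Icc _ _).inter_of_right A)
      ((Set.finite_Icc _ _).inter_of_right A)]
  push_cast; ring



lemma limsup_shift (h : ℕ → ℝ≥0∞) (k : ℕ) :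
    limsup (fun n => h (n + k)) atTop = limsup h atTop := by
  have : (fun n => h (n + k)) = h ∘ (fun n => n + k) := rfl
  rw [this, limsup, limsup, ← Filter.map_map, Filter.map_add_atTop_eq_nat]

lemma liminf_shift (h : ℕ → ℝ≥0∞) (k : ℕ) :
    liminf (fun n => h (n + k)) atTop = liminf h atTop := by
  have : (fun n => h (n + k)) = h ∘ (fun n => n + k) := rfl
  rw [this, liminf, liminf, ← Filter.map_map, Filter.map_add_atTop_eq_nat]

lemma my_limsup_add_le (u v : ℕ → ℝ≥0∞) :
    limsup (fun n => u n + v n) atTop ≤ limsup u atTop + limsup v atTop := by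
  rw [limsup_eq_iInf_iSup_of_nat, limsup_eq_iInf_iSup_of_nat, limsup_eq_iInf_iSup_of_nat,
    ENNReal.iInf_add_iInf (f := fun n : ℕ => ⨆ i ≥ n, u i) (g := fun n : ℕ => ⨆ i ≥ n, v i) ?_]
  · exact iInf_mono fun n => iSup₂_le fun i hi =>
      add_le_add (le_iSup₂ (f := fun i (_ : i ≥ n) => u i) i hi)
        (le_iSup₂ (f := fun i (_ : i ≥ n) => v i) i hi)
  · intro i j
    refine ⟨max i j, add_le_add ?_ ?_⟩
    · exact iSup₂_le fun l hl => le_iSup₂ (f := fun l (_ : l ≥ i) => u l) l (le_trans (le_max_left i j) hl)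
    · exact iSup₂_le fun l hl => le_iSup₂ (f := fun l (_ : l ≥ j) => v l) l (le_trans (le_max_right i j) hl)

lemma my_le_liminf_add (u v : ℕ → ℝ≥0∞) :
    liminf u atTop + liminf v atTop ≤ liminf (fun n => u n + v n) atTop := by
  rw [liminf_eq_iSup_iInf_of_nat, liminf_eq_iSup_iInf_of_nat, liminf_eq_iSup_iInf_of_nat,
    ENNReal.iSup_add_iSup (f := fun n : ℕ => ⨅ i ≥ n, u i) (g := fun n : ℕ => ⨅ i ≥ n, v i) ?_]
  · exact iSup_mono fun n => le_iInf₂ fun i hi =>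
      add_le_add (iInf₂_le (f := fun i (_ : i ≥ n) => u i) i hi)
        (iInf₂_le (f := fun i (_ : i ≥ n) => v i) i hi)
  · intro i j
    refine ⟨max i j, add_le_add ?_ ?_⟩
    · exact le_iInf₂ fun l hl => iInf₂_le (f := fun l (_ : l ≥ i) => u l) l (le_trans (le_max_left i j) hl)
    · exact le_iInf₂ fun l hl => iInf₂_le (f := fun l (_ : l ≥ j) => v l) l (le_trans (le_max_right i j) hl)


noncomputable def Fup (A : Set ℕ) (L : ℕ) : ℝ≥0∞ :=
  limsup (fun n => cnt A (n + 1) (n + L)) atTop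

noncomputable def Glow (A : Set ℕ) (L : ℕ) : ℝ≥0∞ :=
  liminf (fun n => cnt A (n + 1) (n + L)) atTop

lemma Fup_le (A : Set ℕ) (L : ℕ) : Fup A L ≤ (L : ℝ≥0∞) :=
  limsup_le_of_le (by isBoundedDefault) (Eventually.of_forall fun n => cnt_le A n L)

lemma Glow_le (A : Set ℕ) (L : ℕ) : Glow A L ≤ (L : ℝ≥0∞) :=
  (liminf_le_limsup).trans (Fup_le A L)

lemma Glow_mono (A : Set ℕ) {L L' : ℕ} (h : L ≤ L') : Glow A L ≤ Glow A L' :=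
  liminf_le_liminf (Eventually.of_forall fun n => cnt_mono A n h)

lemma Fup_subadd (A : Set ℕ) (L1 L2 : ℕ) : Fup A (L1 + L2) ≤ Fup A L1 + Fup A L2 := by
  have h2 : limsup (fun n => cnt A ((n + L1) + 1) ((n + L1) + L2)) atTop = Fup A L2 :=
    limsup_shift (fun n => cnt A (n + 1) (n + L2)) L1
  calc Fup A (L1 + L2)
      = limsup (fun n => cnt A (n + 1) (n + L1) + cnt A ((n + L1) + 1) ((n + L1) + L2)) atTop :=
        limsup_congr (Eventually.of_forall fun n => cnt_split A n L1 L2)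
    _ ≤ limsup (fun n => cnt A (n + 1) (n + L1)) atTop
        + limsup (fun n => cnt A ((n + L1) + 1) ((n + L1) + L2)) atTop :=
        my_limsup_add_le _ _
    _ = Fup A L1 + Fup A L2 := by rw [h2]; rfl

lemma Glow_superadd (A : Set ℕ) (L1 L2 : ℕ) : Glow A L1 + Glow A L2 ≤ Glow A (L1 + L2) := by
  have h2 : liminf (fun n => cnt A ((n + L1) + 1) ((n + L1) + L2)) atTop = Glow A L2 :=
    liminf_shift (fun n => cnt A (n + 1) (n + L2)) L1
  calc Glow A L1 + Glow A L2
      = liminf (fun n => cnt A (n + 1) (n + L1)) atTop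
        + liminf (fun n => cnt A ((n + L1) + 1) ((n + L1) + L2)) atTop := by rw [h2]; rfl
    _ ≤ liminf (fun n => cnt A (n + 1) (n + L1) + cnt A ((n + L1) + 1) ((n + L1) + L2)) atTop :=
        my_le_liminf_add _ _
    _ = Glow A (L1 + L2) :=
        liminf_congr (Eventually.of_forall fun n => (cnt_split A n L1 L2).symm)

lemma Fup_iter (A : Set ℕ) (L q r : ℕ) :
    Fup A (L * q + r) ≤ (q : ℝ≥0∞) * Fup A L + Fup A r := by
  induction q with
  | zero => simp
  | succ q ih =>
    have he : L * (q + 1) + r = L + (L * q + r) := by ring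
    rw [he]
    calc Fup A (L + (L * q + r)) ≤ Fup A L + Fup A (L * q + r) := Fup_subadd A L _
      _ ≤ Fup A L + ((q : ℝ≥0∞) * Fup A L + Fup A r) := add_le_add_right ih _
      _ = ((q : ℕ) + 1 : ℝ≥0∞) * Fup A L + Fup A r := by ring
      _ = ((q + 1 : ℕ) : ℝ≥0∞) * Fup A L + Fup A r := by push_cast; ring

lemma Glow_iter (A : Set ℕ) (L q : ℕ) :
    (q : ℝ≥0∞) * Glow A L ≤ Glow A (L * q) := by
  induction q with
  | zero => simp
  | succ q ih =>
    have he : L * (q + 1) = L * q + L := by ring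
    rw [he]
    calc ((q + 1 : ℕ) : ℝ≥0∞) * Glow A L = (q : ℝ≥0∞) * Glow A L + Glow A L := by
          push_cast; ring
      _ ≤ Glow A (L * q) + Glow A L := add_le_add_left ih _
      _ ≤ Glow A (L * q + L) := Glow_superadd A _ _


lemma Fup_def (A : Set ℕ) (L : ℕ) : Fup A L = limsup (fun n => cnt A (n + 1) (n + L)) atTop := rfl
lemma Glow_def (A : Set ℕ) (L : ℕ) : Glow A L = liminf (fun n => cnt A (n + 1) (n + L)) atTop := rfl

noncomputable def dF (A : Set ℕ) : ℝ≥0∞ := ⨅ L : ℕ, Fup A (L + 1) / ((L + 1 : ℕ) : ℝ≥0∞)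
noncomputable def dG (A : Set ℕ) : ℝ≥0∞ := ⨆ L : ℕ, Glow A (L + 1) / ((L + 1 : ℕ) : ℝ≥0∞)

-- ratio of nat division tends to 1/L'
lemma tendsto_nat_div_ennreal {a : ℕ → ℕ} {x : ℝ} (h : Tendsto (fun n : ℕ => (a n : ℝ) / n) atTop (𝓝 x)) :
    Tendsto (fun n : ℕ => (a n : ℝ≥0∞) / n) atTop (𝓝 (ENNReal.ofReal x)) := by
  have h2 : Tendsto (fun n : ℕ => ENNReal.ofReal ((a n : ℝ) / n)) atTop (𝓝 (ENNReal.ofReal x)) :=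
    (ENNReal.continuous_ofReal.tendsto x).comp h
  refine h2.congr' ?_
  filter_upwards [eventually_ge_atTop 1] with n hn
  rw [ENNReal.ofReal_div_of_pos (by exact_mod_cast hn), ENNReal.ofReal_natCast,
    ENNReal.ofReal_natCast]

lemma tendsto_div_ratio (L : ℕ) (hL : 0 < L) :
    Tendsto (fun n : ℕ => ((n / L : ℕ) : ℝ≥0∞) / n) atTop (𝓝 (((L : ℝ≥0∞))⁻¹)) := by
  have hreal : Tendsto (fun n : ℕ => ((n / L : ℕ) : ℝ) / n) atTop (𝓝 (1 / L)) := by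
    have hlow : Tendsto (fun n : ℕ => 1 / (L : ℝ) - 1 / n) atTop (𝓝 (1 / L)) := by
      simpa using tendsto_const_nhds.sub (tendsto_one_div_atTop_nhds_zero_nat (𝕜 := ℝ))
    have hhigh : Tendsto (fun _ : ℕ => 1 / (L : ℝ)) atTop (𝓝 (1 / L)) := tendsto_const_nhds
    refine tendsto_of_tendsto_of_tendsto_of_le_of_le' hlow hhigh ?_ ?_
    · filter_upwards [eventually_ge_atTop 1] with n hn
      have hn0 : (0 : ℝ) < n := by exact_mod_cast hn
      have hkey : (n : ℝ) / L - 1 ≤ ((n / L : ℕ) : ℝ) := by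
        have h1 : L * (n / L) + L > n := by
          have h := Nat.div_add_mod n L
          have h' := Nat.mod_lt n hL
          omega
        have h2 : (n : ℝ) < (L : ℝ) * ((n / L : ℕ) : ℝ) + L := by exact_mod_cast h1
        have hL0 : (0 : ℝ) < L := by exact_mod_cast hL
        rw [div_sub' (ne_of_gt hL0), div_le_iff₀ hL0]
        nlinarith
      calc 1 / (L : ℝ) - 1 / n = ((n : ℝ) / L - 1) / n := by
            field_simp
          _ ≤ ((n / L : ℕ) : ℝ) / n := by gcongr
    · filter_upwards [eventually_ge_atTop 1] with n hn
      have hn0 : (0 : ℝ) < n := by exact_mod_cast hn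
      have : ((n / L : ℕ) : ℝ) ≤ (n : ℝ) / L := Nat.cast_div_le
      calc ((n / L : ℕ) : ℝ) / n ≤ ((n : ℝ) / L) / n := by gcongr
        _ = 1 / L := by field_simp
  have := tendsto_nat_div_ennreal (a := fun n => n / L) hreal
  have heq : ENNReal.ofReal (1 / L) = ((L : ℝ≥0∞))⁻¹ := by
    rw [ENNReal.ofReal_div_of_pos (by exact_mod_cast hL), ENNReal.ofReal_one,
      ENNReal.ofReal_natCast, one_div]
  rwa [heq] at this

lemma tendsto_Fup (A : Set ℕ) :
    Tendsto (fun n : ℕ => Fup A n / (n : ℝ≥0∞)) atTop (𝓝 (dF A)) := by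
  have hup : limsup (fun n : ℕ => Fup A n / (n : ℝ≥0∞)) atTop ≤ dF A := by
    refine le_iInf fun L => ?_
    set L' := L + 1 with hL'def
    have hL' : 0 < L' := Nat.succ_pos L
    have hev : ∀ᶠ n : ℕ in atTop,
        Fup A n / (n : ℝ≥0∞) ≤ Fup A L' / (L' : ℝ≥0∞) + (L' : ℝ≥0∞) / n := by
      filter_upwards [eventually_ge_atTop L'] with n hn
      have hq : 1 ≤ n / L' := (Nat.one_le_div_iff hL').2 hn
      have hq0 : ((n / L' : ℕ) : ℝ≥0∞) ≠ 0 := Nat.cast_ne_zero.mpr (by omega)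
      have hsplit : Fup A n ≤ ((n / L' : ℕ) : ℝ≥0∞) * Fup A L' + (L' : ℝ≥0∞) := by
        have hiter := Fup_iter A L' (n / L') (n % L')
        rw [Nat.div_add_mod] at hiter
        refine hiter.trans (add_le_add_right ?_ _)
        exact (Fup_le A _).trans (by exact_mod_cast (Nat.mod_lt n hL').le)
      calc Fup A n / (n : ℝ≥0∞)
          ≤ (((n / L' : ℕ) : ℝ≥0∞) * Fup A L' + (L' : ℝ≥0∞)) / n :=
            ENNReal.div_le_div_right hsplit _
        _ = (((n / L' : ℕ) : ℝ≥0∞) * Fup A L') / n + (L' : ℝ≥0∞) / n := ENNReal.add_div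
        _ ≤ (((n / L' : ℕ) : ℝ≥0∞) * Fup A L') / (((n / L' : ℕ) : ℝ≥0∞) * (L' : ℝ≥0∞))
              + (L' : ℝ≥0∞) / n := by
            refine add_le_add_left (ENNReal.div_le_div_left ?_ _) _
            have : (n / L') * L' ≤ n := Nat.div_mul_le_self n L'
            exact_mod_cast this
        _ = Fup A L' / (L' : ℝ≥0∞) + (L' : ℝ≥0∞) / n := by
            rw [ENNReal.mul_div_mul_left _ _ hq0 (ENNReal.natCast_ne_top _)]
    have htendRHS : Tendsto (fun n : ℕ => Fup A L' / (L' : ℝ≥0∞) + (L' : ℝ≥0∞) / n) atTop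
        (𝓝 (Fup A L' / (L' : ℝ≥0∞))) := by
      have hz : Tendsto (fun n : ℕ => (L' : ℝ≥0∞) / n) atTop (𝓝 0) := by
        have := ENNReal.Tendsto.const_mul (a := (L' : ℝ≥0∞))
          ENNReal.tendsto_inv_nat_nhds_zero (Or.inr (ENNReal.natCast_ne_top _))
        simpa [div_eq_mul_inv] using this
      simpa using tendsto_const_nhds.add hz
    calc limsup (fun n : ℕ => Fup A n / (n : ℝ≥0∞)) atTop
        ≤ limsup (fun n : ℕ => Fup A L' / (L' : ℝ≥0∞) + (L' : ℝ≥0∞) / n) atTop :=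
          limsup_le_limsup hev
      _ = Fup A L' / (L' : ℝ≥0∞) := htendRHS.limsup_eq
  have hlow : dF A ≤ liminf (fun n : ℕ => Fup A n / (n : ℝ≥0∞)) atTop := by
    refine le_liminf_of_le (by isBoundedDefault) ?_
    filter_upwards [eventually_ge_atTop 1] with n hn
    have h := iInf_le (fun L : ℕ => Fup A (L + 1) / ((L + 1 : ℕ) : ℝ≥0∞)) (n - 1)
    have he : n - 1 + 1 = n := Nat.succ_pred_eq_of_pos hn
    rwa [he] at h
  have hll : liminf (fun n : ℕ => Fup A n / (n : ℝ≥0∞)) atTop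
      ≤ limsup (fun n : ℕ => Fup A n / (n : ℝ≥0∞)) atTop := liminf_le_limsup
  have hls : limsup (fun n : ℕ => Fup A n / (n : ℝ≥0∞)) atTop = dF A :=
    le_antisymm hup (hlow.trans hll)
  have hli : liminf (fun n : ℕ => Fup A n / (n : ℝ≥0∞)) atTop = dF A :=
    le_antisymm (hll.trans hup) hlow
  exact tendsto_of_liminf_eq_limsup hli hls

lemma tendsto_Glow (A : Set ℕ) :
    Tendsto (fun n : ℕ => Glow A n / (n : ℝ≥0∞)) atTop (𝓝 (dG A)) := by
  have hup : limsup (fun n : ℕ => Glow A n / (n : ℝ≥0∞)) atTop ≤ dG A := by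
    refine limsup_le_of_le (by isBoundedDefault) ?_
    filter_upwards [eventually_ge_atTop 1] with n hn
    have h := le_iSup (fun L : ℕ => Glow A (L + 1) / ((L + 1 : ℕ) : ℝ≥0∞)) (n - 1)
    have he : n - 1 + 1 = n := Nat.succ_pred_eq_of_pos hn
    rwa [he] at h
  have hlow : dG A ≤ liminf (fun n : ℕ => Glow A n / (n : ℝ≥0∞)) atTop := by
    refine iSup_le fun L => ?_
    set L' := L + 1 with hL'def
    have hL' : 0 < L' := Nat.succ_pos L
    have hptwise : ∀ᶠ n : ℕ in atTop,
        ((n / L' : ℕ) : ℝ≥0∞) * Glow A L' / (n : ℝ≥0∞) ≤ Glow A n / n := by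
      refine Eventually.of_forall fun n => ?_
      refine ENNReal.div_le_div_right ?_ _
      exact (Glow_iter A L' (n / L')).trans (Glow_mono A (Nat.mul_div_le n L' |>.trans le_rfl))
    have htend : Tendsto (fun n : ℕ => ((n / L' : ℕ) : ℝ≥0∞) * Glow A L' / (n : ℝ≥0∞)) atTop
        (𝓝 (Glow A L' / (L' : ℝ≥0∞))) := by
      have h1 : Tendsto (fun n : ℕ => Glow A L' * (((n / L' : ℕ) : ℝ≥0∞) / n)) atTop
          (𝓝 (Glow A L' * ((L' : ℝ≥0∞))⁻¹)) := by
        refine ENNReal.Tendsto.const_mul (tendsto_div_ratio L' hL') ?_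
        exact Or.inr (ne_top_of_le_ne_top (ENNReal.natCast_ne_top L') (Glow_le A L'))
      have heq : ∀ n : ℕ, Glow A L' * (((n / L' : ℕ) : ℝ≥0∞) / n)
          = ((n / L' : ℕ) : ℝ≥0∞) * Glow A L' / (n : ℝ≥0∞) := by
        intro n; rw [div_eq_mul_inv, div_eq_mul_inv]; ring
      have hgoal : Glow A L' / (L' : ℝ≥0∞) = Glow A L' * ((L' : ℝ≥0∞))⁻¹ := div_eq_mul_inv _ _
      rw [hgoal]
      exact h1.congr heq
    calc Glow A L' / (L' : ℝ≥0∞)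
        = liminf (fun n : ℕ => ((n / L' : ℕ) : ℝ≥0∞) * Glow A L' / (n : ℝ≥0∞)) atTop :=
          htend.liminf_eq.symm
      _ ≤ liminf (fun n : ℕ => Glow A n / (n : ℝ≥0∞)) atTop := liminf_le_liminf hptwise
  have hll : liminf (fun n : ℕ => Glow A n / (n : ℝ≥0∞)) atTop
      ≤ limsup (fun n : ℕ => Glow A n / (n : ℝ≥0∞)) atTop := liminf_le_limsup
  have hls : limsup (fun n : ℕ => Glow A n / (n : ℝ≥0∞)) atTop = dG A :=
    le_antisymm hup (hlow.trans hll)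
  have hli : liminf (fun n : ℕ => Glow A n / (n : ℝ≥0∞)) atTop = dG A :=
    le_antisymm (hll.trans hup) hlow
  exact tendsto_of_liminf_eq_limsup hli hls


lemma div_mul_div_cancel'' (a c : ℝ≥0∞) {b : ℝ≥0∞} (hb0 : b ≠ 0) (hbt : b ≠ ⊤) :
    a / b * (b / c) = a / c := by
  rw [div_eq_mul_inv, div_eq_mul_inv, div_eq_mul_inv, mul_assoc, ← mul_assoc b⁻¹,
    ENNReal.inv_mul_cancel hb0 hbt, one_mul]

lemma floor_ratio_tendsto {m : ℕ → ℝ} (h1 : ∀ n, 1 ≤ m n) {k : ℝ}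
    (hlim : Tendsto (fun n : ℕ => m n / (n : ℝ)) atTop (𝓝 k)) :
    Tendsto (fun s : ℕ => ((⌊m s⌋₊ : ℕ) : ℝ≥0∞) / s) atTop (𝓝 (ENNReal.ofReal k)) := by
  refine tendsto_nat_div_ennreal ?_
  have hlow : Tendsto (fun s : ℕ => m s / s - 1 / s) atTop (𝓝 k) := by
    simpa using hlim.sub tendsto_one_div_atTop_nhds_zero_nat
  refine tendsto_of_tendsto_of_tendsto_of_le_of_le' hlow hlim ?_ ?_
  · filter_upwards [eventually_ge_atTop 1] with s hs
    have hs0 : (0 : ℝ) < s := by exact_mod_cast hs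
    have : m s - 1 ≤ (⌊m s⌋₊ : ℝ) := (Nat.sub_one_lt_floor (m s)).le
    calc m s / s - 1 / s = (m s - 1) / s := by ring
      _ ≤ (⌊m s⌋₊ : ℝ) / s := by gcongr
  · filter_upwards [eventually_ge_atTop 1] with s hs
    have hs0 : (0 : ℝ) < s := by exact_mod_cast hs
    have : (⌊m s⌋₊ : ℝ) ≤ m s := Nat.floor_le ((zero_le_one).trans (h1 s))
    gcongr

lemma master {H : ℕ → ℝ≥0∞} {d : ℝ≥0∞} (hbd : ∀ L, H L ≤ (L : ℝ≥0∞))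
    (htend : Tendsto (fun L : ℕ => H L / (L : ℝ≥0∞)) atTop (𝓝 d))
    {m : ℕ → ℝ} (h1 : ∀ n, 1 ≤ m n) {k : ℝ} (hk : 0 ≤ k)
    (hlim : Tendsto (fun n : ℕ => m n / (n : ℝ)) atTop (𝓝 k)) :
    Tendsto (fun s : ℕ => H ⌊m s⌋₊ / (s : ℝ≥0∞)) atTop (𝓝 (ENNReal.ofReal k * d)) := by
  have hfloorE := floor_ratio_tendsto h1 hlim
  rcases eq_or_lt_of_le hk with hk0 | hkpos
  · -- k = 0
    have hz : ENNReal.ofReal k = 0 := by rw [← hk0]; simp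
    rw [hz, zero_mul]
    refine tendsto_of_tendsto_of_tendsto_of_le_of_le' (g := fun _ : ℕ => (0 : ℝ≥0∞))
      tendsto_const_nhds (by rwa [hz] at hfloorE) ?_ ?_
    · exact Eventually.of_forall fun s => zero_le
    · exact Eventually.of_forall fun s => ENNReal.div_le_div_right (hbd _) _
  · -- k > 0
    have hd1 : d ≤ 1 := by
      refine le_of_tendsto htend ?_
      filter_upwards [eventually_ge_atTop 1] with L hL
      calc H L / (L : ℝ≥0∞) ≤ (L : ℝ≥0∞) / (L : ℝ≥0∞) := ENNReal.div_le_div_right (hbd L) _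
        _ ≤ 1 := ENNReal.div_self_le_one
    have hdt : d ≠ ⊤ := ne_top_of_le_ne_top ENNReal.one_ne_top hd1
    have hms : Tendsto m atTop atTop := by
      have hev : ∀ᶠ s : ℕ in atTop, k / 2 * s ≤ m s := by
        have hhalf : ∀ᶠ s : ℕ in atTop, k / 2 < m s / s := by
          have := hlim.eventually (eventually_gt_nhds (half_lt_self hkpos))
          exact this
        filter_upwards [hhalf, eventually_ge_atTop 1] with s hs hs1
        have hs0 : (0 : ℝ) < s := by exact_mod_cast hs1
        rw [lt_div_iff₀ hs0] at hs
        linarith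
      exact tendsto_atTop_mono' atTop hev
        ((tendsto_natCast_atTop_atTop (R := ℝ)).const_mul_atTop (half_pos hkpos))
    have hfl : Tendsto (fun s => ⌊m s⌋₊) atTop atTop := tendsto_nat_floor_atTop.comp hms
    have h1' : Tendsto (fun s : ℕ => H ⌊m s⌋₊ / ((⌊m s⌋₊ : ℕ) : ℝ≥0∞)) atTop (𝓝 d) :=
      htend.comp hfl
    have hprod := ENNReal.Tendsto.mul h1' (Or.inr ENNReal.ofReal_ne_top) hfloorE (Or.inr hdt)
    rw [mul_comm]
    refine hprod.congr' ?_
    filter_upwards [eventually_ge_atTop 1] with s hs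
    have hfl1 : 1 ≤ ⌊m s⌋₊ := Nat.le_floor (by exact_mod_cast h1 s)
    exact div_mul_div_cancel'' _ _ (Nat.cast_ne_zero.mpr (by omega)) (ENNReal.natCast_ne_top _)

lemma liminf_const_mul' {u : ℕ → ℝ≥0∞} {a : ℝ≥0∞} (h0 : a ≠ 0) (ht : a ≠ ⊤) :
    liminf (fun x => a * u x) atTop = a * liminf u atTop := by
  let g := fun x : ℝ≥0∞ => a * x
  have hg_bij : Function.Bijective g :=
    Function.bijective_iff_has_inverse.mpr
      ⟨fun x => a⁻¹ * x,
        ⟨fun x => by simp [g, ← mul_assoc, ENNReal.inv_mul_cancel h0 ht], fun x => by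
          simp [g, ← mul_assoc, ENNReal.mul_inv_cancel h0 ht]⟩⟩
  have hg_mono : StrictMono g :=
    Monotone.strictMono_of_injective (fun _ _ h => by
      exact mul_le_mul_right h a) hg_bij.1
  let g_iso := StrictMono.orderIsoOfSurjective g hg_mono hg_bij.2
  exact (OrderIso.liminf_apply g_iso).symm



lemma inner_limsup (A : Set ℕ) (L : ℕ) {s : ℕ} (hs : s ≠ 0) :
    limsup (fun n => cnt A (n + 1) (n + L) / (s : ℝ≥0∞)) atTop = Fup A L / s := by
  have hinv : ((s : ℝ≥0∞))⁻¹ ≠ ⊤ := ENNReal.inv_ne_top.mpr (Nat.cast_ne_zero.mpr hs)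
  calc limsup (fun n => cnt A (n + 1) (n + L) / (s : ℝ≥0∞)) atTop
      = limsup (fun n => ((s : ℝ≥0∞))⁻¹ * cnt A (n + 1) (n + L)) atTop :=
        limsup_congr (Eventually.of_forall fun n => by rw [div_eq_mul_inv, mul_comm])
    _ = ((s : ℝ≥0∞))⁻¹ * limsup (fun n => cnt A (n + 1) (n + L)) atTop :=
        ENNReal.limsup_const_mul_of_ne_top hinv
    _ = Fup A L / s := by rw [mul_comm, ← div_eq_mul_inv, Fup_def]

lemma inner_liminf (A : Set ℕ) (L : ℕ) {s : ℕ} (hs : s ≠ 0) :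
    liminf (fun n => cnt A (n + 1) (n + L) / (s : ℝ≥0∞)) atTop = Glow A L / s := by
  have hinv : ((s : ℝ≥0∞))⁻¹ ≠ ⊤ := ENNReal.inv_ne_top.mpr (Nat.cast_ne_zero.mpr hs)
  have hinv0 : ((s : ℝ≥0∞))⁻¹ ≠ 0 := ENNReal.inv_ne_zero.mpr (ENNReal.natCast_ne_top s)
  calc liminf (fun n => cnt A (n + 1) (n + L) / (s : ℝ≥0∞)) atTop
      = liminf (fun n => ((s : ℝ≥0∞))⁻¹ * cnt A (n + 1) (n + L)) atTop :=
        liminf_congr (Eventually.of_forall fun n => by rw [div_eq_mul_inv, mul_comm])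
    _ = ((s : ℝ≥0∞))⁻¹ * liminf (fun n => cnt A (n + 1) (n + L)) atTop :=
        liminf_const_mul' hinv0 hinv
    _ = Glow A L / s := by rw [mul_comm, ← div_eq_mul_inv, Glow_def]


end Stmt17Aux

open Stmt17Aux in
theorem stmt17 (m : ℕ → ℝ) (hm : Monotone m) (h1 : ∀ n, 1 ≤ m n) (k : ℝ) (hk : 0 ≤ k)
    (hlim : Filter.Tendsto (fun n : ℕ => m n / (n : ℝ)) Filter.atTop (nhds k)) (A : Set ℕ) :
    (BdUL m A = BdUU m A ∧ BdUU m A = ENNReal.ofReal k * BdUU (fun n => (n : ℝ)) A) ∧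
      (BdLL m A = BdLU m A ∧ BdLU m A = ENNReal.ofReal k * BdLL (fun n => (n : ℝ)) A) := by
  have hF := master (Fup_le A) (tendsto_Fup A) h1 hk hlim
  have hG := master (Glow_le A) (tendsto_Glow A) h1 hk hlim
  have hcongrU : (fun s : ℕ =>
      limsup (fun n : ℕ => cnt A (n + 1) (n + ⌊m s⌋₊) / (s : ℝ≥0∞)) atTop)
        =ᶠ[atTop] fun s : ℕ => Fup A ⌊m s⌋₊ / (s : ℝ≥0∞) := by
    filter_upwards [eventually_ge_atTop 1] with s hs
    exact inner_limsup A _ (by omega)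
  have hcongrL : (fun s : ℕ =>
      liminf (fun n : ℕ => cnt A (n + 1) (n + ⌊m s⌋₊) / (s : ℝ≥0∞)) atTop)
        =ᶠ[atTop] fun s : ℕ => Glow A ⌊m s⌋₊ / (s : ℝ≥0∞) := by
    filter_upwards [eventually_ge_atTop 1] with s hs
    exact inner_liminf A _ (by omega)
  have hBdUU : BdUU m A = ENNReal.ofReal k * dF A := by
    rw [BdUU, limsup_congr hcongrU]; exact hF.limsup_eq
  have hBdUL : BdUL m A = ENNReal.ofReal k * dF A := by
    rw [BdUL, liminf_congr hcongrU]; exact hF.liminf_eq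
  have hBdLU : BdLU m A = ENNReal.ofReal k * dG A := by
    rw [BdLU, limsup_congr hcongrL]; exact hG.limsup_eq
  have hBdLL : BdLL m A = ENNReal.ofReal k * dG A := by
    rw [BdLL, liminf_congr hcongrL]; exact hG.liminf_eq
  have hBdUUid : BdUU (fun n => (n : ℝ)) A = dF A := by
    rw [BdUU]
    have hc : (fun s : ℕ =>
        limsup (fun n : ℕ => cnt A (n + 1) (n + ⌊((s : ℕ) : ℝ)⌋₊) / (s : ℝ≥0∞)) atTop)
          =ᶠ[atTop] fun s : ℕ => Fup A s / (s : ℝ≥0∞) := by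
      filter_upwards [eventually_ge_atTop 1] with s hs
      rw [Nat.floor_natCast]
      exact inner_limsup A s (by omega)
    rw [limsup_congr hc]
    exact (tendsto_Fup A).limsup_eq
  have hBdLLid : BdLL (fun n => (n : ℝ)) A = dG A := by
    rw [BdLL]
    have hc : (fun s : ℕ =>
        liminf (fun n : ℕ => cnt A (n + 1) (n + ⌊((s : ℕ) : ℝ)⌋₊) / (s : ℝ≥0∞)) atTop)
          =ᶠ[atTop] fun s : ℕ => Glow A s / (s : ℝ≥0∞) := by
      filter_upwards [eventually_ge_atTop 1] with s hs
      rw [Nat.floor_natCast]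
      exact inner_liminf A s (by omega)
    rw [liminf_congr hc]
    exact (tendsto_Glow A).liminf_eq
  exact ⟨⟨by rw [hBdUL, hBdUU], by rw [hBdUU, hBdUUid]⟩,
    ⟨by rw [hBdLL, hBdLU], by rw [hBdLU, hBdLLid]⟩⟩
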